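/- For every positive integer k, the quantity p_k := log₂ C(2k,k) satisfies 2k − (1/2)·log₂(πk) − 1/(4k) < p_k < 2k − (1/2)·log₂(πk). -/

import Mathlib

open Real Filter Nat Stirling

noncomputable def dSeq (k : ℕ) : ℝ := k * (((2*k).choose k : ℝ) / 4^k)^2

lemma choose_cast (k : ℕ) : ((2*k).choose k : ℝ) = (2*k)! / (k ! * k !) := by
  rw [eq_div_iff (by positivity)]
  have h := Nat.choose_mul_factorial_mul_factorial (show k ≤ 2*k by omega)
  rw [show 2*k - k = k by omega] at h
  exact_mod_cast by rw [← h]; ring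

lemma dSeq_eq (k : ℕ) (hk : k ≠ 0) :
    dSeq k = stirlingSeq (2*k)^2 / stirlingSeq k^4 := by
  have hk0 : (0:ℝ) < k := by exact_mod_cast Nat.pos_of_ne_zero hk
  have he : (0:ℝ) < exp 1 := exp_pos 1
  rw [dSeq, choose_cast, stirlingSeq, stirlingSeq]
  have h1 : (√(2*(2*k):ℝ))^2 = (2*(2*k):ℝ) := sq_sqrt (by positivity)
  have h2 : (√(2*k:ℝ))^4 = ((2*k:ℝ))^2 := by
    rw [show 4 = 2*2 from rfl, pow_mul, sq_sqrt (by positivity)]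
  have hf1 : ((2*k)! : ℝ) > 0 := by exact_mod_cast Nat.factorial_pos _
  have hf2 : ((k)! : ℝ) > 0 := by exact_mod_cast Nat.factorial_pos _
  simp_rw [div_pow, mul_pow]
  push_cast at h1 h2 ⊢
  rw [h1, h2]
  have h4 : ((4:ℝ)^k)^2 = 2^(4*k) := by
    rw [show (4:ℝ) = 2^2 by norm_num, ← pow_mul, ← pow_mul]; ring_nf
  rw [h4]
  rw [mul_pow (2:ℝ) (k:ℝ) (2*k)]
  field_simp [← exp_nsmul]
  ring

lemma choose_pos_real (k : ℕ) : (0:ℝ) < ((2*k).choose k : ℝ) := by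
  exact_mod_cast Nat.choose_pos (show k ≤ 2*k by omega)

lemma dSeq_pos (k : ℕ) (hk : k ≠ 0) : 0 < dSeq k := by
  have : (0:ℝ) < k := by exact_mod_cast Nat.pos_of_ne_zero hk
  exact mul_pos this (pow_pos (div_pos (choose_pos_real k) (by positivity)) 2)

lemma choose_succ_real (k : ℕ) :
    ((2*(k+1)).choose (k+1) : ℝ) = 2*(2*k+1) * ((2*k).choose k : ℝ) / (k+1) := by
  rw [eq_div_iff (by positivity)]
  have h : (k+1) * ((2*(k+1)).choose (k+1)) = 2*(2*k+1) * ((2*k).choose k) :=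
    Nat.succ_mul_centralBinom_succ k
  have h' : ((k:ℝ)+1) * ((2*(k+1)).choose (k+1) : ℝ) = 2*(2*(k:ℝ)+1) * ((2*k).choose k : ℝ) := by
    exact_mod_cast h
  linarith

lemma dSeq_succ (k : ℕ) (hk : k ≠ 0) :
    dSeq (k+1) = dSeq k * ((2*k+1)^2 / (4*k*(k+1))) := by
  have hk0 : (0:ℝ) < k := by exact_mod_cast Nat.pos_of_ne_zero hk
  rw [dSeq, dSeq, choose_succ_real]
  have h4 : ((4:ℝ)) ^ (k+1) = 4 * 4^k := by ring
  push_cast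
  rw [h4]
  field_simp
  ring

lemma ratio_eq (k : ℕ) (hk : k ≠ 0) :
    (2*(k:ℝ)+1)^2 / (4*k*(k+1)) = 1 + 1/(4*k*(k+1)) := by
  have hk0 : (0:ℝ) < k := by exact_mod_cast Nat.pos_of_ne_zero hk
  field_simp
  ring

lemma dSeq_lt_succ (k : ℕ) (hk : k ≠ 0) : dSeq k < dSeq (k+1) := by
  have hk0 : (0:ℝ) < k := by exact_mod_cast Nat.pos_of_ne_zero hk
  rw [dSeq_succ k hk, ratio_eq k hk]
  have hx : (0:ℝ) < 1/(4*(k:ℝ)*(k+1)) := by positivity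
  nlinarith [dSeq_pos k hk]

lemma dSeq_mono : Monotone dSeq := by
  apply monotone_nat_of_le_succ
  intro k
  rcases Nat.eq_zero_or_pos k with rfl | hk
  · rw [show dSeq 0 = 0 by simp [dSeq]]
    exact (dSeq_pos 1 one_ne_zero).le
  · exact (dSeq_lt_succ k hk.ne').le

lemma dSeq_tendsto : Filter.Tendsto dSeq atTop (nhds (π⁻¹)) := by
  have hs := Stirling.tendsto_stirlingSeq_sqrt_pi
  have h2 : Filter.Tendsto (fun k => stirlingSeq (2*k)) atTop (nhds (√π)) :=
    hs.comp (tendsto_id.const_mul_atTop' two_pos)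
  have hne : (√π) ≠ 0 := (sqrt_pos.mpr pi_pos).ne'
  have ht : Filter.Tendsto (fun k => stirlingSeq (2*k)^2 / stirlingSeq k^4) atTop
      (nhds ((√π)^2/(√π)^4)) := (h2.pow 2).div (hs.pow 4) (pow_ne_zero _ hne)
  have heq : (√π)^2/(√π)^4 = π⁻¹ := by
    rw [show 4 = 2*2 from rfl, pow_mul, sq_sqrt pi_pos.le]
    field_simp
  rw [heq] at ht
  refine ht.congr' (Filter.eventually_atTop.mpr ⟨1, fun n hn => ?_⟩) |>.congr (fun _ => rfl)
  exact (dSeq_eq n (by omega)).symm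

lemma dSeq_lt_inv_pi (k : ℕ) (hk : k ≠ 0) : dSeq k < π⁻¹ :=
  lt_of_lt_of_le (dSeq_lt_succ k hk) (dSeq_mono.ge_of_tendsto dSeq_tendsto (k+1))

lemma gSeq_antitone :
    Antitone (fun n : ℕ => dSeq (n+1) * Real.exp (1/(4*((n:ℝ)+1)))) := by
  apply antitone_nat_of_succ_le
  intro n
  set k := n + 1 with hkdef
  have hk0 : (0:ℝ) < (k:ℝ) := by positivity
  have hd := dSeq_pos k (by omega)
  have hx : (0:ℝ) < 1/(4*(k:ℝ)*(k+1)) := by positivity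
  have h1 : 1 + 1/(4*(k:ℝ)*(k+1)) ≤ Real.exp (1/(4*(k:ℝ)*(k+1))) := by
    have := Real.add_one_le_exp (1/(4*(k:ℝ)*(k+1))); linarith
  have hexp : Real.exp (1/(4*(k:ℝ)*(k+1))) * Real.exp (1/(4*((k:ℝ)+1)))
      = Real.exp (1/(4*(k:ℝ))) := by
    rw [← Real.exp_add]
    congr 1
    field_simp
    ring
  have hcast : ((n:ℝ)+1) = (k:ℝ) := by push_cast [hkdef]; ring
  simp only [hkdef]
  push_cast
  calc dSeq (n+1+1) * Real.exp (1/(4*((n:ℝ)+1+1)))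
      = dSeq (n+1) * ((2*(n+1:ℝ)+1)^2 / (4*(n+1)*((n+1)+1))) * Real.exp (1/(4*((n:ℝ)+1+1))) := by
        rw [dSeq_succ (n+1) (by omega)]; push_cast; ring_nf
    _ ≤ dSeq (n+1) * Real.exp (1/(4*(n+1:ℝ)*((n+1)+1))) * Real.exp (1/(4*((n:ℝ)+1+1))) := by
        apply mul_le_mul_of_nonneg_right _ (Real.exp_pos _).le
        apply mul_le_mul_of_nonneg_left _ (dSeq_pos (n+1) (by omega)).le
        rw [show (2*(n+1:ℝ)+1)^2 / (4*(n+1)*((n+1)+1)) = 1 + 1/(4*(n+1:ℝ)*((n+1)+1)) by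
          have := ratio_eq (n+1) (by omega); push_cast at this ⊢; linarith [this]]
        have := Real.add_one_le_exp (1/(4*((n:ℝ)+1)*((n+1)+1))); linarith
    _ = dSeq (n+1) * Real.exp (1/(4*((n:ℝ)+1))) := by
        rw [mul_assoc, ← Real.exp_add]
        congr 2
        have h0 : ((n:ℝ)+1) ≠ 0 := by positivity
        have h2 : ((n:ℝ)+1+1) ≠ 0 := by positivity
        field_simp
        ring

lemma gSeq_tendsto :
    Filter.Tendsto (fun n : ℕ => dSeq (n+1) * Real.exp (1/(4*((n:ℝ)+1)))) atTop (nhds (π⁻¹)) := by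
  have h1 : Filter.Tendsto (fun n : ℕ => dSeq (n+1)) atTop (nhds (π⁻¹)) :=
    dSeq_tendsto.comp (Filter.tendsto_add_atTop_nat 1)
  have h2 : Filter.Tendsto (fun n : ℕ => (4*((n:ℝ)+1))) atTop atTop := by
    apply Filter.Tendsto.const_mul_atTop four_pos
    exact Filter.tendsto_atTop_add_const_right atTop 1 tendsto_natCast_atTop_atTop
  have h3 : Filter.Tendsto (fun n : ℕ => 1/(4*((n:ℝ)+1))) atTop (nhds 0) := by
    refine h2.inv_tendsto_atTop.congr (fun n => ?_)
    simp [one_div]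
  have h4 : Filter.Tendsto (fun n : ℕ => Real.exp (1/(4*((n:ℝ)+1)))) atTop (nhds 1) := by
    simpa [Function.comp_def] using (Real.continuous_exp.tendsto 0).comp h3
  simpa using h1.mul h4

lemma inv_pi_le_dSeq_mul (k : ℕ) (hk : k ≠ 0) :
    π⁻¹ ≤ dSeq k * Real.exp (1/(4*(k:ℝ))) := by
  obtain ⟨n, rfl⟩ : ∃ n, k = n + 1 := ⟨k - 1, by omega⟩
  have := gSeq_antitone.le_of_tendsto gSeq_tendsto n
  push_cast at this ⊢
  convert this using 4

/-- For every positive integer `k`, the quantity `p_k = log₂ C(2k,k)` satisfies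
`2k − (1/2) log₂(πk) − 1/(4k) < p_k < 2k − (1/2) log₂(πk)`. -/
theorem pk_bounds (k : ℕ) (hk : 0 < k) :
    2 * (k : ℝ) - (1 / 2) * Real.logb 2 (Real.pi * k) - 1 / (4 * k) <
        Real.logb 2 (Nat.choose (2 * k) k) ∧
      Real.logb 2 (Nat.choose (2 * k) k) < 2 * (k : ℝ) - (1 / 2) * Real.logb 2 (Real.pi * k) := by
  have hC : (0:ℝ) < ((2*k).choose k : ℝ) := choose_pos_real k
  set C : ℝ := ((2*k).choose k : ℝ) with hCdef
  set K : ℝ := (k:ℝ) with hKdef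
  have hK : (0:ℝ) < K := by rw [hKdef]; exact_mod_cast hk
  set L : ℝ := Real.log 2 with hLdef
  have hL : (0:ℝ) < L := Real.log_pos one_lt_two
  have hL2 : 1/2 < L := by
    have := Real.log_two_gt_d9; rw [hLdef]; linarith
  have h4 : (0:ℝ) < 4^k := by positivity
  have h16 : ((4:ℝ)^k)^2 = 2^(4*k) := by
    rw [show (4:ℝ)=2^2 by norm_num, ← pow_mul, ← pow_mul]; ring_nf
  have hdval : dSeq k = K * (C/4^k)^2 := rfl
  -- upper bound on π K C²
  have hd := dSeq_lt_inv_pi k hk.ne'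
  have h1 : π * dSeq k < 1 := by
    have := mul_lt_mul_of_pos_left hd pi_pos
    rwa [mul_inv_cancel₀ pi_pos.ne'] at this
  have heqq : π * K * C^2 = (π * dSeq k) * ((4:ℝ)^k)^2 := by
    rw [hdval]; field_simp
  have hu : π * K * C^2 < 2^(4*k) := by
    calc π * K * C^2 = (π * dSeq k) * ((4:ℝ)^k)^2 := heqq
      _ < 1 * ((4:ℝ)^k)^2 := by exact mul_lt_mul_of_pos_right h1 (by positivity)
      _ = 2^(4*k) := by rw [one_mul, h16]
  have hlogu : Real.log (π*K*C^2) < (4*k) * L := by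
    have := Real.log_lt_log (by positivity) hu
    rw [Real.log_pow] at this
    push_cast at this
    rw [← hLdef] at this
    linarith
  have hlog_split : Real.log (π*K*C^2) = Real.log (π*K) + 2 * Real.log C := by
    rw [Real.log_mul (by positivity) (by positivity), Real.log_pow]; push_cast; ring
  -- lower bound on π K C²
  have hle := inv_pi_le_dSeq_mul k hk.ne'
  have h2 : Real.exp (-(1/(4*K))) ≤ π * dSeq k := by
    have h3 : 1 ≤ π * (dSeq k * Real.exp (1/(4*K))) := by
      calc (1:ℝ) = π * π⁻¹ := (mul_inv_cancel₀ pi_pos.ne').symm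
        _ ≤ _ := mul_le_mul_of_nonneg_left hle pi_pos.le
    have h5 := mul_le_mul_of_nonneg_left h3 (Real.exp_pos (-(1/(4*K)))).le
    rw [mul_one] at h5
    calc Real.exp (-(1/(4*K)))
        ≤ Real.exp (-(1/(4*K))) * (π * (dSeq k * Real.exp (1/(4*K)))) := h5
      _ = π * dSeq k * (Real.exp (-(1/(4*K))) * Real.exp (1/(4*K))) := by ring
      _ = π * dSeq k := by rw [← Real.exp_add]; simp
  have hl : (2:ℝ)^(4*k) * Real.exp (-(1/(4*K))) ≤ π * K * C^2 := by
    calc (2:ℝ)^(4*k) * Real.exp (-(1/(4*K))) = ((4:ℝ)^k)^2 * Real.exp (-(1/(4*K))) := by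
          rw [h16]
      _ ≤ ((4:ℝ)^k)^2 * (π * dSeq k) := by
          exact mul_le_mul_of_nonneg_left h2 (by positivity)
      _ = π * K * C^2 := by rw [heqq]; ring
  have hlogl : (4*k) * L - 1/(4*K) ≤ Real.log (π*K*C^2) := by
    have hh := Real.log_le_log (by positivity) hl
    rw [Real.log_mul (by positivity) (Real.exp_ne_zero _), Real.log_pow, Real.log_exp] at hh
    push_cast at hh
    rw [← hLdef] at hh
    linarith
  -- convert to logb
  simp only [Real.logb, ← hCdef, ← hKdef, ← hLdef]
  constructor
  · rw [lt_div_iff₀ hL]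
    have expand : (2*K - 1/2*(Real.log (π*K)/L) - 1/(4*K)) * L
        = 2*K*L - 1/2*Real.log (π*K) - 1/(4*K)*L := by field_simp
    rw [show (2*K - 1/2*(Real.log (π*K)/L) - 1/(4*K)) * L = 2*K*L - 1/2*Real.log (π*K) - 1/(4*K)*L from expand]
    have e2 : 1/(4*K)*(1/2) < 1/(4*K)*L := by
      exact mul_lt_mul_of_pos_left hL2 (by positivity)
    nlinarith [hlogl, hlog_split, e2]
  · rw [div_lt_iff₀ hL]
    have expand : (2*K - 1/2*(Real.log (π*K)/L)) * L = 2*K*L - 1/2*Real.log (π*K) := by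
      field_simp
    rw [show (2*K - 1/2*(Real.log (π*K)/L)) * L = 2*K*L - 1/2*Real.log (π*K) from expand]
    linarith [hlogu, hlog_split]
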